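/- Let K be a field, let A be a configuration in K[t_1,…,t_d], and for each i = 1,…,d let B_i = {m_1^{(i)},…,m_{λ_i}^{(i)}} be a configuration in a polynomial ring K[u^{(i)}], where the variable sets u^{(1)},…,u^{(d)} are pairwise disjoint. For every monomial M of K[u^{(1)},…,u^{(d)}] in the nested configuration A(B_1,…,B_d), fix an expression M = m_{j_1}^{(i_1)}⋯m_{j_r}^{(i_r)} with t_{i_1}⋯t_{i_r} ∈ A, and let φ_j (j = 1,…,d) be the associated K-algebra maps φ_j(x_M) = ∏_{k : i_k = j} z_{j_k}^{(j)} and π_j(z_k^{(j)}) = m_k^{(j)}. Then for every monomial x^α in K[x_M : M ∈ A(B_1,…,B_d)], the image π(x^α) factors as π(x^α) = ∏_{j=1}^d π_j(φ_j(x^α)), where for each j the factor π_j(φ_j(x^α)) is a monomial lying in K[u^{(j)}]; consequently, for monomials x^α, x^β one has π(x^α) = π(x^β) if and only if π_j(φ_j(x^α)) = π_j(φ_j(x^β)) for all j = 1,…,d. -/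
import Mathlib


open MvPolynomial

/-- Total degree of an exponent vector. -/
def expDeg {σ : Type*} (a : σ →₀ ℕ) : ℕ := a.sum fun _ e => e

/-- A set of monomials (given by exponent vectors) is a configuration if some nonnegative
weight vector gives every member weight `1`. -/
def IsConfig {σ : Type*} (A : Set (σ →₀ ℕ)) : Prop :=
  ∃ w : σ → ℝ, (∀ i, 0 ≤ w i) ∧ ∀ a ∈ A, (a.sum fun i e => w i * (e : ℝ)) = 1

/-- The `K`-algebra homomorphism sending the variable indexed by `s` to the monomial with
exponent vector `v s`. -/
noncomputable def toricHom (K : Type*) [Field K] {σ τ : Type*} (v : σ → (τ →₀ ℕ)) :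
    MvPolynomial σ K →ₐ[K] MvPolynomial τ K :=
  MvPolynomial.aeval fun s => MvPolynomial.monomial (v s) (1 : K)

/-- The toric ideal of a family of monomials (given by exponent vectors). -/
noncomputable def toricIdeal (K : Type*) [Field K] {σ τ : Type*} (v : σ → (τ →₀ ℕ)) :
    Ideal (MvPolynomial σ K) :=
  RingHom.ker (toricHom K v)

/-- `r` is a monomial order: a linear order, compatible with addition, with `0` least. -/
def IsMonomialOrder {σ : Type*} (r : (σ →₀ ℕ) → (σ →₀ ℕ) → Prop) : Prop :=
  IsLinearOrder (σ →₀ ℕ) r ∧ (∀ a, r 0 a) ∧ ∀ a b c, r a b → r (a + c) (b + c)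

/-- `m` is the leading monomial (exponent) of `f` with respect to the monomial order `r`. -/
def IsLeadingMonomial {σ K : Type*} [CommSemiring K]
    (r : (σ →₀ ℕ) → (σ →₀ ℕ) → Prop) (f : MvPolynomial σ K) (m : σ →₀ ℕ) : Prop :=
  m ∈ f.support ∧ ∀ m' ∈ f.support, r m' m

/-- `G` is a Gröbner basis of `I` w.r.t. `r`: `G ⊆ I` and the leading monomial of every
nonzero element of `I` is divisible by the leading monomial of some element of `G`. -/
def IsGroebnerBasis {σ K : Type*} [Field K] (r : (σ →₀ ℕ) → (σ →₀ ℕ) → Prop)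
    (I : Ideal (MvPolynomial σ K)) (G : Set (MvPolynomial σ K)) : Prop :=
  (∀ g ∈ G, g ∈ I) ∧
  ∀ f ∈ I, f ≠ 0 → ∀ mf, IsLeadingMonomial r f mf →
    ∃ g ∈ G, ∃ mg, IsLeadingMonomial r g mg ∧ mg ≤ mf

/-- `G` is the reduced Gröbner basis: a Gröbner basis, leading coefficients `1`, and no
monomial of an element is divisible by the leading monomial of another element. -/
def IsReducedGroebnerBasis {σ K : Type*} [Field K] (r : (σ →₀ ℕ) → (σ →₀ ℕ) → Prop)
    (I : Ideal (MvPolynomial σ K)) (G : Set (MvPolynomial σ K)) : Prop :=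
  IsGroebnerBasis r I G ∧
  (∀ g ∈ G, ∀ m, IsLeadingMonomial r g m → MvPolynomial.coeff m g = 1) ∧
  ∀ g ∈ G, ∀ g' ∈ G, g' ≠ g → ∀ m ∈ g.support, ∀ m', IsLeadingMonomial r g' m' → ¬ m' ≤ m

/-- A homogeneous binomial of degree 2, i.e. a difference of two distinct quadratic monomials. -/
def IsQuadBinomial {σ K : Type*} [CommRing K] (f : MvPolynomial σ K) : Prop :=
  ∃ a b : σ →₀ ℕ, a ≠ b ∧ expDeg a = 2 ∧ expDeg b = 2 ∧
    f = MvPolynomial.monomial a (1 : K) - MvPolynomial.monomial b (1 : K)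

/-- `I` possesses a quadratic Gröbner basis. -/
def HasQuadraticGB {σ K : Type*} [Field K] (I : Ideal (MvPolynomial σ K)) : Prop :=
  ∃ r, IsMonomialOrder r ∧ ∃ G, (∀ g ∈ G, IsQuadBinomial g) ∧ IsGroebnerBasis r I G

/-- The initial ideal of `I` w.r.t. `r`: ideal generated by the leading monomials of the
nonzero elements of `I`. -/
noncomputable def initialIdeal {σ K : Type*} [Field K] (r : (σ →₀ ℕ) → (σ →₀ ℕ) → Prop)
    (I : Ideal (MvPolynomial σ K)) : Ideal (MvPolynomial σ K) :=
  Ideal.span {p | ∃ f ∈ I, f ≠ 0 ∧ ∃ m, IsLeadingMonomial r f m ∧ p = MvPolynomial.monomial m (1 : K)}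

/-- A squarefree exponent vector. -/
def SquarefreeExp {σ : Type*} (m : σ →₀ ℕ) : Prop := ∀ i, m i ≤ 1

/-- The nested configuration `A(B_1, …, B_d)`. -/
def NestedConfig {d : ℕ} {lam mu : Fin d → ℕ} (A : Set (Fin d →₀ ℕ))
    (B : (i : Fin d) → Fin (lam i) → (Fin (mu i) →₀ ℕ)) :
    Set ((Σ i : Fin d, Fin (mu i)) →₀ ℕ) :=
  { M | ∃ n : ℕ, 1 ≤ n ∧ ∃ s : Fin n → Σ i : Fin d, Fin (lam i),
      (∑ k, Finsupp.single (s k).1 1) ∈ A ∧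
      M = ∑ k, Finsupp.mapDomain (Sigma.mk (s k).1) (B (s k).1 (s k).2) }

/-- The exponent vector of `φ_j(x_M)` determined by the chosen standard expressions. -/
noncomputable def phiExp {d : ℕ} {lam mu : Fin d → ℕ} {A : Set (Fin d →₀ ℕ)}
    {B : (i : Fin d) → Fin (lam i) → (Fin (mu i) →₀ ℕ)}
    (n : ↥(NestedConfig A B) → ℕ)
    (s : (M : ↥(NestedConfig A B)) → Fin (n M) → Σ i : Fin d, Fin (lam i))
    (j : Fin d) (M : ↥(NestedConfig A B)) : Fin (lam j) →₀ ℕ :=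
  ∑ k : Fin (n M), if h : (s M k).1 = j
    then Finsupp.single (Fin.cast (congrArg lam h) (s M k).2) 1 else 0

section NestedHelpers

lemma prod_monomial_one' {K : Type*} [CommSemiring K] {τ ι : Type*} (S : Finset ι)
    (g : ι → (τ →₀ ℕ)) :
    (∏ s ∈ S, MvPolynomial.monomial (g s) (1 : K)) =
      MvPolynomial.monomial (∑ s ∈ S, g s) 1 := by
  classical
  induction S using Finset.cons_induction with
  | empty => simp
  | cons a S ha ih =>
    rw [Finset.prod_cons, Finset.sum_cons, ih, MvPolynomial.monomial_mul, one_mul]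

/-- The exponent vector of the image of the monomial `x^α` under `toricHom`. -/
noncomputable def expSum {σ τ : Type*} (v : σ → (τ →₀ ℕ)) (α : σ →₀ ℕ) : τ →₀ ℕ :=
  ∑ s ∈ α.support, α s • v s

lemma toricHom_monomial {K : Type*} [Field K] {σ τ : Type*} (v : σ → (τ →₀ ℕ)) (α : σ →₀ ℕ) :
    toricHom K v (MvPolynomial.monomial α 1) = MvPolynomial.monomial (expSum v α) 1 := by
  rw [toricHom, MvPolynomial.aeval_monomial, map_one, one_mul, Finsupp.prod, expSum,
    ← prod_monomial_one']
  exact Finset.prod_congr rfl fun s _ => by rw [MvPolynomial.monomial_pow, one_pow]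

lemma expSum_fintype {σ τ : Type*} [Fintype σ] (v : σ → (τ →₀ ℕ)) (x : σ →₀ ℕ) :
    expSum v x = ∑ s : σ, x s • v s :=
  Finset.sum_subset (Finset.subset_univ _) (fun s _ hs => by
    simp [Finsupp.notMem_support_iff.mp hs])

lemma expSum_sum {σ τ ι : Type*} [Fintype σ] (v : σ → (τ →₀ ℕ)) (S : Finset ι)
    (f : ι → (σ →₀ ℕ)) :
    expSum v (∑ i ∈ S, f i) = ∑ i ∈ S, expSum v (f i) := by
  simp only [expSum_fintype, Finsupp.finset_sum_apply, Finset.sum_smul]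
  exact Finset.sum_comm

lemma expSum_smul {σ τ : Type*} [Fintype σ] (v : σ → (τ →₀ ℕ)) (c : ℕ) (x : σ →₀ ℕ) :
    expSum v (c • x) = c • expSum v x := by
  simp only [expSum_fintype, Finsupp.smul_apply, smul_eq_mul, mul_smul, Finset.smul_sum]

lemma expSum_single_one {σ τ : Type*} [Fintype σ] [DecidableEq σ] (v : σ → (τ →₀ ℕ))
    (a : σ) : expSum v (Finsupp.single a 1) = v a := by
  rw [expSum_fintype, Finset.sum_eq_single a]
  · simp
  · intro s _ hs; simp [Finsupp.single_apply, Ne.symm hs]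
  · intro h; exact absurd (Finset.mem_univ a) h

lemma expSum_zero {σ τ : Type*} (v : σ → (τ →₀ ℕ)) : expSum v (0 : σ →₀ ℕ) = 0 := by
  simp [expSum]

lemma sigma_sum_apply {d : ℕ} {mu : Fin d → ℕ} (v : (j : Fin d) → (Fin (mu j) →₀ ℕ))
    (j : Fin d) (u : Fin (mu j)) :
    (∑ j' : Fin d, Finsupp.mapDomain (Sigma.mk j') (v j')) ⟨j, u⟩ = v j u := by
  rw [Finsupp.finset_sum_apply, Finset.sum_eq_single j]
  · exact Finsupp.mapDomain_apply sigma_mk_injective _ _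
  · intro j' _ hj'
    apply Finsupp.mapDomain_notin_range
    rintro ⟨u', hu'⟩
    exact hj' (congrArg Sigma.fst hu')
  · intro h; exact absurd (Finset.mem_univ j) h

end NestedHelpers

/-- for every monomial `x^α` of `K[x_M : M ∈ A(B_1,…,B_d)]`, the image
`π(x^α)` factors as `∏_j π_j(φ_j(x^α))`, each factor being a monomial lying in `K[u^{(j)}]`;
consequently `π(x^α) = π(x^β)` iff `π_j(φ_j(x^α)) = π_j(φ_j(x^β))` for all `j`. -/
theorem nested_pi_factorization
    {K : Type*} [Field K] {d : ℕ} {lam mu : Fin d → ℕ}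
    (A : Finset (Fin d →₀ ℕ))
    (B : (i : Fin d) → Fin (lam i) → (Fin (mu i) →₀ ℕ))
    (hA : IsConfig (↑A : Set (Fin d →₀ ℕ)))
    (hB : ∀ i, IsConfig (Set.range (B i)))
    -- a fixed expression `M = m_{j_1}^{(i_1)} ⋯ m_{j_r}^{(i_r)}` for each `M ∈ A(B_1,…,B_d)`
    (n : ↥(NestedConfig (↑A : Set (Fin d →₀ ℕ)) B) → ℕ)
    (s : (M : ↥(NestedConfig (↑A : Set (Fin d →₀ ℕ)) B)) → Fin (n M) → Σ i : Fin d, Fin (lam i))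
    (hn : ∀ M, 1 ≤ n M)
    (hsA : ∀ M, (∑ k, Finsupp.single (s M k).1 1) ∈ A)
    (hsM : ∀ M : ↥(NestedConfig (↑A : Set (Fin d →₀ ℕ)) B),
      (M : (Σ i : Fin d, Fin (mu i)) →₀ ℕ) =
        ∑ k, Finsupp.mapDomain (Sigma.mk (s M k).1) (B (s M k).1 (s M k).2)) :
    (∀ α : (↥(NestedConfig (↑A : Set (Fin d →₀ ℕ)) B)) →₀ ℕ,
      (toricHom K (fun M : ↥(NestedConfig (↑A : Set (Fin d →₀ ℕ)) B) =>
          (M : (Σ i : Fin d, Fin (mu i)) →₀ ℕ))) (MvPolynomial.monomial α 1) =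
        ∏ j : Fin d, MvPolynomial.rename (Sigma.mk j)
          ((toricHom K (B j)) ((toricHom K (phiExp n s j)) (MvPolynomial.monomial α 1))) ∧
      ∀ j : Fin d, ∃ v : Fin (mu j) →₀ ℕ,
        (toricHom K (B j)) ((toricHom K (phiExp n s j)) (MvPolynomial.monomial α 1)) =
          MvPolynomial.monomial v 1) ∧
    ∀ α β : (↥(NestedConfig (↑A : Set (Fin d →₀ ℕ)) B)) →₀ ℕ,
      ((toricHom K (fun M : ↥(NestedConfig (↑A : Set (Fin d →₀ ℕ)) B) =>
          (M : (Σ i : Fin d, Fin (mu i)) →₀ ℕ))) (MvPolynomial.monomial α 1) =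
        (toricHom K (fun M : ↥(NestedConfig (↑A : Set (Fin d →₀ ℕ)) B) =>
          (M : (Σ i : Fin d, Fin (mu i)) →₀ ℕ))) (MvPolynomial.monomial β 1) ↔
        ∀ j : Fin d,
          (toricHom K (B j)) ((toricHom K (phiExp n s j)) (MvPolynomial.monomial α 1)) =
          (toricHom K (B j)) ((toricHom K (phiExp n s j)) (MvPolynomial.monomial β 1))) := by
  classical
  -- the fixed expression, rewritten via the chosen data
  have hM : ∀ M : ↥(NestedConfig (↑A : Set (Fin d →₀ ℕ)) B), (∑ j : Fin d, Finsupp.mapDomain (Sigma.mk j)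
      (expSum (B j) (phiExp n s j M))) = (M : (Σ i : Fin d, Fin (mu i)) →₀ ℕ) := by
    intro M
    rw [hsM M]
    have h1 : ∀ j : Fin d, expSum (B j) (phiExp n s j M) =
        ∑ k : Fin (n M), (if h : (s M k).1 = j
          then B j (Fin.cast (congrArg lam h) (s M k).2) else 0) := by
      intro j
      rw [phiExp, expSum_sum]
      refine Finset.sum_congr rfl fun k _ => ?_
      by_cases h : (s M k).1 = j
      · simp only [h, dif_pos]
        exact expSum_single_one _ _
      · simp only [h, dif_neg, not_false_iff]
        exact expSum_zero _
    simp only [h1, Finsupp.mapDomain_finset_sum]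
    rw [Finset.sum_comm]
    refine Finset.sum_congr rfl fun k _ => ?_
    have hpush : ∀ j : Fin d, Finsupp.mapDomain (Sigma.mk j)
        (if h : (s M k).1 = j then B j (Fin.cast (congrArg lam h) (s M k).2)
          else (0 : Fin (mu j) →₀ ℕ))
        = (if h : (s M k).1 = j then Finsupp.mapDomain (Sigma.mk j)
            (B j (Fin.cast (congrArg lam h) (s M k).2))
          else (0 : (Σ i : Fin d, Fin (mu i)) →₀ ℕ)) := by
      intro j
      split
      · rfl
      · exact Finsupp.mapDomain_zero
    simp only [hpush]
    rw [Finset.sum_dite_eq]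
    simp
  -- the key exponent identity
  have hkey : ∀ α : ↥(NestedConfig (↑A : Set (Fin d →₀ ℕ)) B) →₀ ℕ, expSum (fun M : ↥(NestedConfig (↑A : Set (Fin d →₀ ℕ)) B) => (M : (Σ i : Fin d, Fin (mu i)) →₀ ℕ)) α =
      ∑ j : Fin d, Finsupp.mapDomain (Sigma.mk j)
        (expSum (B j) (expSum (phiExp n s j) α)) := by
    intro α
    have h2 : ∀ j : Fin d, expSum (B j) (expSum (phiExp n s j) α) =
        ∑ M ∈ α.support, α M • expSum (B j) (phiExp n s j M) := by
      intro j
      rw [show expSum (phiExp n s j) α = ∑ M ∈ α.support, α M • phiExp n s j M from rfl,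
        expSum_sum]
      exact Finset.sum_congr rfl fun M _ => expSum_smul _ _ _
    calc expSum (fun M : ↥(NestedConfig (↑A : Set (Fin d →₀ ℕ)) B) => (M : (Σ i : Fin d, Fin (mu i)) →₀ ℕ)) α
        = ∑ M ∈ α.support, α M • (M : (Σ i : Fin d, Fin (mu i)) →₀ ℕ) := rfl
      _ = ∑ M ∈ α.support, α M • ∑ j : Fin d, Finsupp.mapDomain (Sigma.mk j)
            (expSum (B j) (phiExp n s j M)) := by
          refine Finset.sum_congr rfl fun M _ => ?_
          rw [hM M]
      _ = ∑ M ∈ α.support, ∑ j : Fin d, α M • Finsupp.mapDomain (Sigma.mk j)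
            (expSum (B j) (phiExp n s j M)) := by
          exact Finset.sum_congr rfl fun M _ => Finset.smul_sum
      _ = ∑ j : Fin d, ∑ M ∈ α.support, α M • Finsupp.mapDomain (Sigma.mk j)
            (expSum (B j) (phiExp n s j M)) := Finset.sum_comm
      _ = ∑ j : Fin d, Finsupp.mapDomain (Sigma.mk j)
            (expSum (B j) (expSum (phiExp n s j) α)) := by
          refine Finset.sum_congr rfl fun j _ => ?_
          rw [h2, Finsupp.mapDomain_finset_sum]
          exact Finset.sum_congr rfl fun M _ => (Finsupp.mapDomain_smul _ _).symm
  -- the factorization of `π(x^α)`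
  have hfact : ∀ α : ↥(NestedConfig (↑A : Set (Fin d →₀ ℕ)) B) →₀ ℕ,
      (toricHom K (fun M : ↥(NestedConfig (↑A : Set (Fin d →₀ ℕ)) B) => (M : (Σ i : Fin d, Fin (mu i)) →₀ ℕ)))
        (MvPolynomial.monomial α 1) =
      ∏ j : Fin d, MvPolynomial.rename (Sigma.mk j)
        ((toricHom K (B j)) ((toricHom K (phiExp n s j)) (MvPolynomial.monomial α 1))) := by
    intro α
    rw [toricHom_monomial, hkey α, ← prod_monomial_one']
    refine Finset.prod_congr rfl fun j _ => ?_
    rw [toricHom_monomial, toricHom_monomial, MvPolynomial.rename_monomial]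
  have hmono : ∀ (α : ↥(NestedConfig (↑A : Set (Fin d →₀ ℕ)) B) →₀ ℕ) (j : Fin d),
      (toricHom K (B j)) ((toricHom K (phiExp n s j)) (MvPolynomial.monomial α 1)) =
        MvPolynomial.monomial (expSum (B j) (expSum (phiExp n s j) α)) 1 := by
    intro α j
    rw [toricHom_monomial, toricHom_monomial]
  refine ⟨fun α => ⟨hfact α, fun j => ⟨_, hmono α j⟩⟩, fun α β => ⟨?_, ?_⟩⟩
  · intro h j
    rw [toricHom_monomial, toricHom_monomial] at h
    have hexp := MvPolynomial.monomial_left_injective (one_ne_zero (α := K)) h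
    rw [hkey α, hkey β] at hexp
    have hcomp : expSum (B j) (expSum (phiExp n s j) α)
        = expSum (B j) (expSum (phiExp n s j) β) := by
      ext u
      have := DFunLike.congr_fun hexp (⟨j, u⟩ : Σ i : Fin d, Fin (mu i))
      rwa [sigma_sum_apply, sigma_sum_apply] at this
    rw [hmono α j, hmono β j, hcomp]
  · intro h
    rw [hfact α, hfact β]
    exact Finset.prod_congr rfl fun j _ => by rw [h j]
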